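/- Representations trivial on the approximately inner part give centrally trivial bimodules: Fix crossed-product data (N, τ, G, g ↦ u_g, M, (β_g)) as in the context. Let L ⊆ G be the set of g ∈ G for which the automorphism m ↦ u_g m u_g* of M is approximately inner, i.e. there exist unitaries (v_n) in M with ‖u_g m u_g* − v_n m v_n*‖₂ → 0 for every m ∈ M. Assume that for every g ∉ L, every norm-bounded sequence (y_n) in M with ‖y_n·(u_g m u_g*) − m·y_n‖₂ → 0 for all m ∈ M satisfies ‖y_n‖₂ → 0. Let d ≥ 1 and let π : G → U(d) be a group homomorphism into the d×d complex unitary matrices with π(h) = 1 for all h ∈ L. Equip V := N^d (d-tuples of elements of N) with the norm ‖ξ‖₂ := √(Σ_{i=1}^d ‖ξ_i‖₂²), the right action (ξ ◁ x)_i := ξ_i·x, and the left action (x ▷ ξ)_i := Σ_{g∈G} Σ_{j=1}^d π(g)_{ij}·(β_g(x)·u_g·ξ_j) for x ∈ N. Then for every norm-bounded sequence (x_n) in N with ‖x_n b − b x_n‖₂ → 0 for all b ∈ N, and for every ξ ∈ V, one has ‖x_n ▷ ξ − ξ ◁ x_n‖₂ → 0 as n → ∞. -/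

import Mathlib

open Filter Topology

section AuxCrossed
set_option linter.unusedSectionVars false

variable {N : Type*} [NormedRing N] [StarRing N] [CStarRing N] [CompleteSpace N]
  [NormedAlgebra ℂ N] [StarModule ℂ N] (τ : N →ₗ[ℂ] ℂ)

lemma aux_re_symm (hτpos : ∀ x : N, 0 ≤ (τ (star x * x)).re ∧ (τ (star x * x)).im = 0)
    (x y : N) : (τ (star y * x)).re = (τ (star x * y)).re := by
  have e1 : star (x + Complex.I • y) * (x + Complex.I • y)
      = star x * x + star y * y + Complex.I • (star x * y) + (-Complex.I) • (star y * x) := by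
    simp only [star_add, star_smul, add_mul, mul_add, smul_mul_assoc, mul_smul_comm,
      smul_smul, Complex.star_def, Complex.conj_I, smul_add, neg_mul, Complex.I_mul_I,
      neg_neg, one_smul]
    match_scalars <;> simp
  have h0 := (hτpos (x + Complex.I • y)).2
  rw [e1] at h0
  simp only [map_add, map_smul, Complex.add_im, Complex.smul_im, Complex.neg_im,
    Complex.smul_re, smul_eq_mul, Complex.mul_im, Complex.I_re, Complex.I_im,
    Complex.neg_re, (hτpos x).2, (hτpos y).2] at h0
  linarith

lemma aux_p_smul (t : ℝ) (y : N) :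
    (τ (star ((t:ℂ) • y) * ((t:ℂ) • y))).re = t^2 * (τ (star y * y)).re := by
  rw [star_smul, smul_mul_assoc, mul_smul_comm, smul_smul, map_smul]
  rw [show (star ((t:ℂ)) * (t:ℂ)) = ((t*t:ℝ):ℂ) by
    rw [Complex.star_def, Complex.conj_ofReal]; push_cast; ring]
  simp only [smul_eq_mul, Complex.mul_re, Complex.ofReal_re, Complex.ofReal_im, zero_mul, sub_zero]
  ring

lemma aux_p_add (hτpos : ∀ x : N, 0 ≤ (τ (star x * x)).re ∧ (τ (star x * x)).im = 0)
    (x y : N) : (τ (star (x + y) * (x + y))).re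
      = (τ (star x * x)).re + (τ (star y * y)).re + 2 * (τ (star x * y)).re := by
  rw [star_add, add_mul, mul_add, mul_add]
  simp only [map_add, Complex.add_re]
  rw [aux_re_symm τ hτpos x y]
  ring

lemma aux_cs (hτpos : ∀ x : N, 0 ≤ (τ (star x * x)).re ∧ (τ (star x * x)).im = 0)
    (x y : N) : (τ (star x * y)).re
      ≤ Real.sqrt (τ (star x * x)).re * Real.sqrt (τ (star y * y)).re := by
  set px := (τ (star x * x)).re with hpx
  set py := (τ (star y * y)).re with hpy
  set r := (τ (star x * y)).re with hr
  have hq : ∀ t : ℝ, 0 ≤ py * (t * t) + (2 * r) * t + px := by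
    intro t
    have h := (hτpos (x + (t:ℂ) • y)).1
    rw [aux_p_add τ hτpos x ((t:ℂ) • y), aux_p_smul τ t y, mul_smul_comm, map_smul] at h
    simp only [smul_eq_mul, Complex.mul_re, Complex.ofReal_re, Complex.ofReal_im, zero_mul,
      sub_zero] at h
    nlinarith [h]
  have hd := discrim_le_zero hq
  rw [discrim] at hd
  have h2 : r^2 ≤ px * py := by nlinarith
  calc r ≤ |r| := le_abs_self r
    _ = Real.sqrt (r^2) := (Real.sqrt_sq_eq_abs r).symm
    _ ≤ Real.sqrt (px * py) := Real.sqrt_le_sqrt h2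
    _ = Real.sqrt px * Real.sqrt py := Real.sqrt_mul (hτpos x).1 _

variable (n2 : N → ℝ)

lemma aux_n2_nonneg (hn2 : ∀ x, n2 x = Real.sqrt ((τ (star x * x)).re)) (x : N) : 0 ≤ n2 x := by rw [hn2]; exact Real.sqrt_nonneg _

lemma aux_n2_zero (hn2 : ∀ x, n2 x = Real.sqrt ((τ (star x * x)).re)) : n2 0 = 0 := by
  rw [hn2]
  simp

lemma aux_n2_add (hn2 : ∀ x, n2 x = Real.sqrt ((τ (star x * x)).re)) (hτpos : ∀ x : N, 0 ≤ (τ (star x * x)).re ∧ (τ (star x * x)).im = 0)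
    (x y : N) : n2 (x + y) ≤ n2 x + n2 y := by
  have hx0 := aux_n2_nonneg τ n2 hn2 x
  have hy0 := aux_n2_nonneg τ n2 hn2 y
  have hsq : (τ (star (x + y) * (x + y))).re ≤ (n2 x + n2 y)^2 := by
    rw [aux_p_add τ hτpos x y]
    have hcs := aux_cs τ hτpos x y
    have hx : n2 x ^ 2 = (τ (star x * x)).re := by
      rw [hn2]; exact Real.sq_sqrt (hτpos x).1
    have hy : n2 y ^ 2 = (τ (star y * y)).re := by
      rw [hn2]; exact Real.sq_sqrt (hτpos y).1
    rw [← hn2, ← hn2] at hcs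
    nlinarith
  calc n2 (x + y) = Real.sqrt ((τ (star (x + y) * (x + y))).re) := hn2 _
    _ ≤ Real.sqrt ((n2 x + n2 y)^2) := Real.sqrt_le_sqrt hsq
    _ = n2 x + n2 y := Real.sqrt_sq (by positivity)

lemma aux_n2_sum (hn2 : ∀ x, n2 x = Real.sqrt ((τ (star x * x)).re)) (hτpos : ∀ x : N, 0 ≤ (τ (star x * x)).re ∧ (τ (star x * x)).im = 0)
    {ι : Type*} (s : Finset ι) (v : ι → N) :
    n2 (∑ k ∈ s, v k) ≤ ∑ k ∈ s, n2 (v k) := by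
  classical
  induction s using Finset.induction with
  | empty => simp [aux_n2_zero τ n2 hn2]
  | insert _ _ hk ih =>
    rw [Finset.sum_insert hk, Finset.sum_insert hk]
    exact le_trans (aux_n2_add τ n2 hn2 hτpos _ _) (add_le_add_right ih _)

lemma aux_n2_smul (hn2 : ∀ x, n2 x = Real.sqrt ((τ (star x * x)).re)) (c : ℂ) (z : N) : n2 (c • z) = ‖c‖ * n2 z := by
  rw [hn2, hn2]
  have e : star (c • z) * (c • z) = ((Complex.normSq c : ℝ) : ℂ) • (star z * z) := by
    rw [star_smul, smul_mul_assoc, mul_smul_comm, smul_smul, Complex.star_def,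
      ← Complex.normSq_eq_conj_mul_self]
  rw [e, map_smul]
  simp only [smul_eq_mul, Complex.mul_re, Complex.ofReal_re, Complex.ofReal_im, zero_mul,
    sub_zero]
  rw [Real.sqrt_mul (Complex.normSq_nonneg c), Complex.norm_def]

lemma aux_n2_unitary_right (hn2 : ∀ x, n2 x = Real.sqrt ((τ (star x * x)).re)) (hτtr : ∀ x y : N, τ (x * y) = τ (y * x))
    (a w : N) (hw : w * star w = 1) : n2 (a * w) = n2 a := by
  have e : τ (star (a * w) * (a * w)) = τ (star a * a) := by
    rw [star_mul]
    rw [show (star w * star a) * (a * w) = star w * (star a * (a * w)) by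
      simp only [mul_assoc]]
    rw [hτtr]
    rw [show (star a * (a * w)) * star w = star a * (a * (w * star w)) by
      simp only [mul_assoc]]
    rw [hw, mul_one]
  rw [hn2, hn2, e]

lemma aux_exists_sqrt (b : N) :
    ∃ c : N, star c * c = algebraMap ℝ N (‖b‖^2) - b * star b := by
  letI : CStarAlgebra N := ⟨⟩
  letI := CStarAlgebra.spectralOrder N
  haveI := CStarAlgebra.spectralOrderedRing N
  have hz : (0:N) ≤ algebraMap ℝ N (‖b‖^2) - b * star b :=
    sub_nonneg.mpr CStarAlgebra.mul_star_le_algebraMap_norm_sq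
  refine ⟨CFC.sqrt (algebraMap ℝ N (‖b‖^2) - b * star b), ?_⟩
  have h1 : IsSelfAdjoint (CFC.sqrt (algebraMap ℝ N (‖b‖^2) - b * star b)) :=
    IsSelfAdjoint.of_nonneg (CFC.sqrt_nonneg _)
  rw [h1.star_eq, CFC.sqrt_mul_sqrt_self _ hz]

lemma aux_n2_mul_le (hn2 : ∀ x, n2 x = Real.sqrt ((τ (star x * x)).re)) (hτpos : ∀ x : N, 0 ≤ (τ (star x * x)).re ∧ (τ (star x * x)).im = 0)
    (hτtr : ∀ x y : N, τ (x * y) = τ (y * x))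
    (a b : N) : n2 (a * b) ≤ n2 a * ‖b‖ := by
  obtain ⟨c, hc⟩ := aux_exists_sqrt b
  have e1 : τ (star (a * b) * (a * b)) = τ ((star a * a) * (b * star b)) := by
    rw [star_mul]
    rw [show (star b * star a) * (a * b) = star b * (star a * (a * b)) by
      simp only [mul_assoc]]
    rw [hτtr]
    rw [show (star a * (a * b)) * star b = (star a * a) * (b * star b) by
      simp only [mul_assoc]]
  have e2 : b * star b = algebraMap ℝ N (‖b‖^2) - star c * c := by
    rw [hc, sub_sub_cancel]
  have e3 : τ ((star a * a) * algebraMap ℝ N (‖b‖^2))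
      = ((‖b‖^2 : ℝ) : ℂ) * τ (star a * a) := by
    rw [IsScalarTower.algebraMap_apply ℝ ℂ N, ← Algebra.commutes, ← Algebra.smul_def, map_smul]
    simp [Complex.coe_algebraMap]
  have e4 : 0 ≤ (τ ((star a * a) * (star c * c))).re := by
    have e5 : τ ((star a * a) * (star c * c)) = τ (star (a * star c) * (a * star c)) := by
      have h1 : (star a * a) * (star c * c) = ((star a * a) * star c) * c := by
        simp only [mul_assoc]
      rw [h1, hτtr]
      congr 1
      rw [star_mul, star_star]
      simp only [mul_assoc]
    rw [e5]
    exact (hτpos (a * star c)).1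
  have key : (τ (star (a * b) * (a * b))).re ≤ ‖b‖^2 * (τ (star a * a)).re := by
    rw [e1, e2, mul_sub, map_sub, e3]
    simp only [Complex.sub_re, Complex.mul_re, Complex.ofReal_re, Complex.ofReal_im, zero_mul,
      sub_zero]
    linarith [e4]
  calc n2 (a * b) = Real.sqrt ((τ (star (a * b) * (a * b))).re) := hn2 _
    _ ≤ Real.sqrt (‖b‖^2 * (τ (star a * a)).re) := Real.sqrt_le_sqrt key
    _ = ‖b‖ * Real.sqrt ((τ (star a * a)).re) := by
        rw [Real.sqrt_mul (sq_nonneg _), Real.sqrt_sq (norm_nonneg b)]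
    _ = n2 a * ‖b‖ := by rw [← hn2]; ring

lemma aux_tendsto_n2_sum (hn2 : ∀ x, n2 x = Real.sqrt ((τ (star x * x)).re)) (hτpos : ∀ x : N, 0 ≤ (τ (star x * x)).re ∧ (τ (star x * x)).im = 0)
    {ι : Type*} (s : Finset ι) (f : ι → ℕ → N)
    (h : ∀ k ∈ s, Tendsto (fun n => n2 (f k n)) atTop (nhds 0)) :
    Tendsto (fun n => n2 (∑ k ∈ s, f k n)) atTop (nhds 0) := by
  have hb : Tendsto (fun n => ∑ k ∈ s, n2 (f k n)) atTop (nhds 0) := by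
    have := tendsto_finset_sum s h
    simpa using this
  exact squeeze_zero (fun n => aux_n2_nonneg τ n2 hn2 _)
    (fun n => aux_n2_sum τ n2 hn2 hτpos s (fun k => f k n)) hb

lemma aux_tendsto_n2_add (hn2 : ∀ x, n2 x = Real.sqrt ((τ (star x * x)).re)) (hτpos : ∀ x : N, 0 ≤ (τ (star x * x)).re ∧ (τ (star x * x)).im = 0)
    (f g : ℕ → N)
    (hf : Tendsto (fun n => n2 (f n)) atTop (nhds 0))
    (hg : Tendsto (fun n => n2 (g n)) atTop (nhds 0)) :
    Tendsto (fun n => n2 (f n + g n)) atTop (nhds 0) := by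
  have hb : Tendsto (fun n => n2 (f n) + n2 (g n)) atTop (nhds 0) := by
    simpa using hf.add hg
  exact squeeze_zero (fun n => aux_n2_nonneg τ n2 hn2 _)
    (fun n => aux_n2_add τ n2 hn2 hτpos _ _) hb

end AuxCrossed

/-- Representations trivial on the approximately inner part of the action give centrally
trivial bimodules: with crossed-product data `(N, τ, G, u, M, β)`, `L ⊆ G` the set of
group elements whose associated automorphism `Ad (u g)` of `M` is approximately inner,
assuming the non-approximately-inner elements force almost-intertwining bounded sequences
in `M` to vanish in `‖·‖₂`, and `π : G → U(d)` a unitary representation with `π h = 1`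
for `h ∈ L`, the bimodule `V = N^d` (with the indicated left and right actions) commutes
asymptotically with every bounded central sequence of `N`. -/
theorem rep_trivial_on_approxInner_centrally_trivial
    {N : Type*} [NormedRing N] [StarRing N] [CStarRing N] [CompleteSpace N]
    [NormedAlgebra ℂ N] [StarModule ℂ N]
    (τ : N →ₗ[ℂ] ℂ) (hτ1 : τ 1 = 1)
    (hτpos : ∀ x : N, 0 ≤ (τ (star x * x)).re ∧ (τ (star x * x)).im = 0)
    (hτtr : ∀ x y : N, τ (x * y) = τ (y * x))
    (hτfaith : ∀ x : N, τ (star x * x) = 0 → x = 0)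
    (n2 : N → ℝ) (hn2 : ∀ x, n2 x = Real.sqrt ((τ (star x * x)).re))
    {G : Type*} [Group G] [Fintype G]
    (u : G →* N) (hu : ∀ g, star (u g) * u g = 1 ∧ u g * star (u g) = 1)
    (M : StarSubalgebra ℂ N)
    (hMinv : ∀ g : G, ∀ m ∈ M, u g * m * star (u g) ∈ M)
    (β : G → N →ₗ[ℂ] N)
    (hβmem : ∀ g b, β g b ∈ M)
    (hβnorm : ∀ g b, ‖β g b‖ ≤ ‖b‖)
    (hβsum : ∀ b : N, b = ∑ g : G, β g b * u g)
    (hτM : ∀ g : G, g ≠ 1 → ∀ m ∈ M, τ (m * u g) = 0)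
    -- `L` is the set of `g` for which `Ad (u g)` is approximately inner on `M`:
    (L : Set G)
    (hL : ∀ g : G, g ∈ L ↔ ∃ v : ℕ → N,
      (∀ n, v n ∈ M ∧ star (v n) * v n = 1 ∧ v n * star (v n) = 1) ∧
      ∀ m ∈ M, Tendsto (fun n => n2 (u g * m * star (u g) - v n * m * star (v n)))
        atTop (nhds 0))
    -- non-approximately-inner elements force decay:
    (houter : ∀ g ∉ L, ∀ y : ℕ → N, (∀ n, y n ∈ M) →
      (∃ C : ℝ, ∀ n, ‖y n‖ ≤ C) →
      (∀ m ∈ M, Tendsto (fun n => n2 (y n * (u g * m * star (u g)) - m * y n))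
        atTop (nhds 0)) →
      Tendsto (fun n => n2 (y n)) atTop (nhds 0))
    -- a unitary representation of `G`, trivial on `L`:
    (d : ℕ) (hd : 1 ≤ d)
    (π : G →* Matrix.unitaryGroup (Fin d) ℂ)
    (hπ : ∀ h ∈ L, π h = 1)
    -- the bimodule `V = N^d`, its `‖·‖₂`-norm, and its left and right actions:
    (Vnorm : (Fin d → N) → ℝ)
    (hVnorm : ∀ ξ : Fin d → N, Vnorm ξ = Real.sqrt (∑ i, (n2 (ξ i)) ^ 2))
    (leftAct : N → (Fin d → N) → (Fin d → N))
    (hleft : ∀ (x : N) (ξ : Fin d → N) (i : Fin d),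
      leftAct x ξ i = ∑ g : G, ∑ j : Fin d,
        ((π g : Matrix (Fin d) (Fin d) ℂ) i j) • (β g x * u g * ξ j))
    (rightAct : (Fin d → N) → N → (Fin d → N))
    (hright : ∀ (ξ : Fin d → N) (x : N) (i : Fin d), rightAct ξ x i = ξ i * x) :
    ∀ x : ℕ → N, (∃ C : ℝ, ∀ n, ‖x n‖ ≤ C) →
      (∀ b : N, Tendsto (fun n => n2 (x n * b - b * x n)) atTop (nhds 0)) →
      ∀ ξ : Fin d → N,
        Tendsto (fun n => Vnorm (leftAct (x n) ξ - rightAct ξ (x n)))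
          atTop (nhds 0) := by
  intro x hxbd hcent ξ
  obtain ⟨C, hC⟩ := hxbd
  classical
  have hstaru : ∀ g : G, star (u g) = u g⁻¹ := by
    intro g
    have h1 : u g * u g⁻¹ = 1 := by rw [← map_mul, mul_inv_cancel, map_one]
    calc star (u g) = star (u g) * (u g * u g⁻¹) := by rw [h1, mul_one]
      _ = (star (u g) * u g) * u g⁻¹ := by rw [mul_assoc]
      _ = u g⁻¹ := by rw [(hu g).1, one_mul]
  have hcoeff : ∀ (a : G → N), (∀ h, a h ∈ M) → ∀ b : N, (∑ g : G, a g * u g) = b →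
      ∀ h : G, n2 (a h) ≤ n2 b := by
    intro a ha b hb h
    have hb' : b * star (u h) = ∑ g : G, a g * u (g * h⁻¹) := by
      rw [← hb, Finset.sum_mul]
      refine Finset.sum_congr rfl fun g _ => ?_
      rw [hstaru, mul_assoc, ← map_mul]
    have hkey : τ (star (a h) * (b * star (u h))) = τ (star (a h) * a h) := by
      rw [hb', Finset.mul_sum, map_sum, Finset.sum_eq_single h]
      · have h1 : h * h⁻¹ = 1 := by group
        rw [h1, map_one, mul_one]
      · intro g _ hgh
        rw [show star (a h) * (a g * u (g * h⁻¹)) = (star (a h) * a g) * u (g * h⁻¹) from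
          (mul_assoc _ _ _).symm]
        exact hτM (g * h⁻¹) (by simpa [mul_inv_eq_one] using hgh) _
          (mul_mem (star_mem (ha h)) (ha g))
      · intro hu'; exact absurd (Finset.mem_univ h) hu'
    have hsq : n2 (a h) ^ 2 = (τ (star (a h) * a h)).re := by
      rw [hn2]; exact Real.sq_sqrt (hτpos _).1
    have hcs := aux_cs τ hτpos (a h) (b * star (u h))
    rw [← hn2, ← hn2] at hcs
    have hru : n2 (b * star (u h)) = n2 b :=
      aux_n2_unitary_right τ n2 hn2 hτtr b (star (u h)) (by rw [star_star]; exact (hu h).1)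
    have h2 : n2 (a h) ^ 2 ≤ n2 (a h) * n2 b := by
      calc n2 (a h) ^ 2 = (τ (star (a h) * (b * star (u h)))).re := by rw [hsq, hkey]
        _ ≤ n2 (a h) * n2 (b * star (u h)) := hcs
        _ = n2 (a h) * n2 b := by rw [hru]
    nlinarith [aux_n2_nonneg τ n2 hn2 (a h), aux_n2_nonneg τ n2 hn2 b]
  have hdecay : ∀ g ∉ L, Tendsto (fun n => n2 (β g (x n))) atTop (nhds 0) := by
    intro g hg
    refine houter g hg (fun n => β g (x n)) (fun n => hβmem g (x n))
      ⟨C, fun n => le_trans (hβnorm g (x n)) (hC n)⟩ ?_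
    intro m hm
    have key : ∀ n, n2 (β g (x n) * (u g * m * star (u g)) - m * β g (x n))
        ≤ n2 (x n * m - m * x n) := by
      intro n
      refine hcoeff (fun h => β h (x n) * (u h * m * star (u h)) - m * β h (x n))
        (fun h => sub_mem (mul_mem (hβmem h (x n)) (hMinv h m hm)) (mul_mem hm (hβmem h (x n))))
        (x n * m - m * x n) ?_ g
      have e1 : ∀ h : G, (β h (x n) * (u h * m * star (u h)) - m * β h (x n)) * u h
          = β h (x n) * u h * m - m * (β h (x n) * u h) := by
        intro h
        rw [sub_mul]
        congr 1
        · simp only [mul_assoc]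
          rw [(hu h).1, mul_one]
        · rw [mul_assoc]
      calc ∑ h : G, (β h (x n) * (u h * m * star (u h)) - m * β h (x n)) * u h
          = ∑ h : G, (β h (x n) * u h * m - m * (β h (x n) * u h)) :=
            Finset.sum_congr rfl (fun h _ => e1 h)
        _ = (∑ h : G, β h (x n) * u h) * m - m * (∑ h : G, β h (x n) * u h) := by
            rw [Finset.sum_sub_distrib, ← Finset.sum_mul, ← Finset.mul_sum]
        _ = x n * m - m * x n := by rw [← hβsum (x n)]
    exact squeeze_zero (fun n => aux_n2_nonneg τ n2 hn2 _) key (hcent m)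
  have hcomp : ∀ i : Fin d,
      Tendsto (fun n => n2 ((leftAct (x n) ξ - rightAct ξ (x n)) i)) atTop (nhds 0) := by
    intro i
    have hrepr : ∀ n, (leftAct (x n) ξ - rightAct ξ (x n)) i
        = (∑ g : G, ∑ j : Fin d, (((π g : Matrix (Fin d) (Fin d) ℂ) i j)
            - (1 : Matrix (Fin d) (Fin d) ℂ) i j) • (β g (x n) * u g * ξ j))
          + (x n * ξ i - ξ i * x n) := by
      intro n
      rw [Pi.sub_apply, hleft, hright]
      have e2 : ∀ g : G, ∑ j : Fin d,
          ((1 : Matrix (Fin d) (Fin d) ℂ) i j) • (β g (x n) * u g * ξ j)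
          = β g (x n) * u g * ξ i := by
        intro g
        rw [Finset.sum_eq_single i]
        · rw [Matrix.one_apply_eq, one_smul]
        · intro j _ hji
          rw [Matrix.one_apply_ne (Ne.symm hji), zero_smul]
        · intro hi; exact absurd (Finset.mem_univ i) hi
      have e3 : ∑ g : G, β g (x n) * u g * ξ i = x n * ξ i := by
        rw [← Finset.sum_mul, ← hβsum]
      simp only [sub_smul, Finset.sum_sub_distrib, e2, e3]
      abel
    simp only [hrepr]
    apply aux_tendsto_n2_add τ n2 hn2 hτpos
    · apply aux_tendsto_n2_sum τ n2 hn2 hτpos Finset.univ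
        (fun g n => ∑ j : Fin d, (((π g : Matrix (Fin d) (Fin d) ℂ) i j)
          - (1 : Matrix (Fin d) (Fin d) ℂ) i j) • (β g (x n) * u g * ξ j))
      intro g _
      apply aux_tendsto_n2_sum τ n2 hn2 hτpos Finset.univ
        (fun j n => (((π g : Matrix (Fin d) (Fin d) ℂ) i j)
          - (1 : Matrix (Fin d) (Fin d) ℂ) i j) • (β g (x n) * u g * ξ j))
      intro j _
      by_cases hgL : g ∈ L
      · have hc0 : ((π g : Matrix (Fin d) (Fin d) ℂ) i j)
            - (1 : Matrix (Fin d) (Fin d) ℂ) i j = 0 := by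
          rw [hπ g hgL]
          simp
        simp only [hc0, zero_smul, aux_n2_zero τ n2 hn2]
        exact tendsto_const_nhds
      · set cc := ((π g : Matrix (Fin d) (Fin d) ℂ) i j)
          - (1 : Matrix (Fin d) (Fin d) ℂ) i j with hcc
        have hbound : ∀ n, n2 (cc • (β g (x n) * u g * ξ j))
            ≤ (‖cc‖ * ‖u g * ξ j‖) * n2 (β g (x n)) := by
          intro n
          rw [aux_n2_smul τ n2 hn2, mul_assoc]
          have h1 := aux_n2_mul_le τ n2 hn2 hτpos hτtr (β g (x n)) (u g * ξ j)
          calc ‖cc‖ * n2 (β g (x n) * (u g * ξ j))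
              ≤ ‖cc‖ * (n2 (β g (x n)) * ‖u g * ξ j‖) :=
                mul_le_mul_of_nonneg_left h1 (norm_nonneg cc)
            _ = (‖cc‖ * ‖u g * ξ j‖) * n2 (β g (x n)) := by ring
        have hlim : Tendsto (fun n => (‖cc‖ * ‖u g * ξ j‖) * n2 (β g (x n)))
            atTop (nhds 0) := by
          simpa using (hdecay g hgL).const_mul (‖cc‖ * ‖u g * ξ j‖)
        exact squeeze_zero (fun n => aux_n2_nonneg τ n2 hn2 _) hbound hlim
    · exact hcent (ξ i)
  simp only [hVnorm]
  have hs : Tendsto (fun n => ∑ i : Fin d,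
      (n2 ((leftAct (x n) ξ - rightAct ξ (x n)) i)) ^ 2) atTop (nhds 0) := by
    have := tendsto_finset_sum (Finset.univ : Finset (Fin d)) (fun i _ => (hcomp i).pow 2)
    simpa using this
  have hfin := (Real.continuous_sqrt.tendsto 0).comp hs
  simpa [Function.comp_def] using hfin
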